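/- Let D be a simply connected rectilinear domain, h₁, h₂ horizontal slices and v₁, v₂ vertical slices of D such that the interiors of each vᵢ and hⱼ pairwise intersect (so {v₁,h₁,v₂,h₂} induces a 4-cycle in the pixelation graph). Then the convex hull of the union of the four pixels vᵢ ∩ hⱼ is an axis-aligned rectangle contained in D. -/

import Mathlib

/-- `v` is a vertical slice of the rectilinear domain `D`: a nondegenerate
axis-aligned closed rectangle contained in `D` whose top and bottom sides lie on
the boundary of `D`. -/
def IsVSlice (D v : Set (ℝ × ℝ)) : Prop :=
  ∃ a b c d : ℝ, a < b ∧ c < d ∧ v = Set.Icc a b ×ˢ Set.Icc c d ∧ v ⊆ D ∧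
    (Set.Icc a b ×ˢ ({c} : Set ℝ)) ⊆ frontier D ∧
    (Set.Icc a b ×ˢ ({d} : Set ℝ)) ⊆ frontier D

/-- `h` is a horizontal slice of the rectilinear domain `D`. -/
def IsHSlice (D h : Set (ℝ × ℝ)) : Prop :=
  ∃ a b c d : ℝ, a < b ∧ c < d ∧ h = Set.Icc a b ×ˢ Set.Icc c d ∧ h ⊆ D ∧
    (({a} : Set ℝ) ×ˢ Set.Icc c d) ⊆ frontier D ∧
    (({b} : Set ℝ) ×ˢ Set.Icc c d) ⊆ frontier D

open Set unitInterval Complex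

noncomputable section

/-- scale a point of the unit square by `r ∈ [0,1]`. -/
def sqScale (r : I) (z : I × I) : I × I :=
  (⟨(r : ℝ) * z.1, unitInterval.mul_mem r.2 z.1.2⟩,
   ⟨(r : ℝ) * z.2, unitInterval.mul_mem r.2 z.2.2⟩)

lemma continuous_sqScale (r : I) : Continuous (sqScale r) := by
  unfold sqScale
  fun_prop

lemma sqScale_zero (z : I × I) : sqScale 0 z = (0, 0) := by
  unfold sqScale
  ext <;> simp

lemma sqScale_one (z : I × I) : sqScale 1 z = z := by
  unfold sqScale
  ext <;> simp

lemma dist_sqScale (r s : I) (z : I × I) :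
    dist (sqScale r z) (sqScale s z) ≤ |(r : ℝ) - s| := by
  rcases z with ⟨⟨x, hx⟩, ⟨y, hy⟩⟩
  have hb : ∀ u : ℝ, u ∈ unitInterval → |(r : ℝ) * u - s * u| ≤ |(r : ℝ) - s| := by
    intro u hu
    rw [← sub_mul, abs_mul]
    calc |(r : ℝ) - s| * |u| ≤ |(r : ℝ) - s| * 1 := by
          apply mul_le_mul_of_nonneg_left _ (abs_nonneg _)
          rw [_root_.abs_of_nonneg hu.1]; exact hu.2
      _ = |(r : ℝ) - s| := mul_one _
  rw [Prod.dist_eq]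
  simp only [sqScale, Subtype.dist_eq, Real.dist_eq]
  exact max_le (hb x hx) (hb y hy)

private lemma tele_prod (a : ℕ → ℂ) (ha : ∀ j, a j ≠ 0) (N : ℕ) :
    ∏ j ∈ Finset.range N, a (j + 1) * (a j)⁻¹ = a N * (a 0)⁻¹ := by
  induction N with
  | zero => simp [mul_inv_cancel₀ (ha 0)]
  | succ n ih =>
      rw [Finset.prod_range_succ, ih]
      calc a n * (a 0)⁻¹ * (a (n + 1) * (a n)⁻¹)
          = a (n + 1) * (a n * (a n)⁻¹) * (a 0)⁻¹ := by ring
        _ = a (n + 1) * (a 0)⁻¹ := by rw [mul_inv_cancel₀ (ha n), mul_one]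

/-- Continuous logarithm for a nonvanishing continuous map on the unit square. -/
lemma exists_log_square (f : I × I → ℂ) (hf : Continuous f) (h0 : ∀ z, f z ≠ 0) :
    ∃ g : I × I → ℂ, Continuous g ∧ ∀ z, Complex.exp (g z) = f z := by
  -- minimum of the norm
  obtain ⟨z₀, -, hz₀⟩ := isCompact_univ.exists_isMinOn (f := fun z => ‖f z‖)
    (Set.univ_nonempty) (hf.norm.continuousOn)
  set m : ℝ := ‖f z₀‖ with hm
  have m_pos : 0 < m := norm_pos_iff.mpr (h0 z₀)
  -- uniform continuity
  have huc : UniformContinuous f := CompactSpace.uniformContinuous_of_continuous hf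
  obtain ⟨δ, δpos, hδ⟩ := Metric.uniformContinuous_iff.mp huc m m_pos
  obtain ⟨n, hn⟩ := exists_nat_one_div_lt δpos
  set N : ℕ := n + 1 with hN
  have hNpos : (0 : ℝ) < N := by positivity
  -- the scaling parameters
  set r : ℕ → I := fun j => ⟨min ((j : ℝ) / N) 1, ⟨le_min (by positivity) zero_le_one,
    min_le_right _ _⟩⟩ with hr
  set a : ℕ → (I × I) → ℂ := fun j z => f (sqScale (r j) z) with haa
  have ha0 : ∀ j z, a j z ≠ 0 := fun j z => h0 _
  have ham : ∀ j z, m ≤ ‖a j z‖ := fun j z => hz₀ (mem_univ _)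
  -- consecutive scalings are δ-close
  have hclose : ∀ j < N, ∀ z, ‖a (j+1) z - a j z‖ < m := by
    intro j hj z
    have h1 : ((j : ℝ)) / N ≤ 1 := by
      rw [div_le_one hNpos]; exact_mod_cast hj.le
    have h2 : ((j : ℝ) + 1) / N ≤ 1 := by
      rw [div_le_one hNpos]; exact_mod_cast hj
    have hd : dist (sqScale (r (j+1)) z) (sqScale (r j) z) < δ := by
      refine lt_of_le_of_lt (dist_sqScale _ _ _) ?_
      have : ((r (j+1) : ℝ)) - (r j : ℝ) = 1 / N := by
        simp only [hr, min_eq_left h2, min_eq_left h1, Nat.cast_add, Nat.cast_one]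
        field_simp
        ring
      rw [this, _root_.abs_of_nonneg (by positivity)]
      calc (1 : ℝ) / N = 1 / (n + 1) := by norm_num [hN]
        _ < δ := hn
    simpa [haa, dist_eq_norm] using hδ hd
  -- the consecutive ratios lie in the slit plane
  set h : ℕ → (I × I) → ℂ := fun j z => a (j + 1) z * (a j z)⁻¹ with hh
  have hne : ∀ j z, h j z ≠ 0 := fun j z => mul_ne_zero (ha0 _ _) (inv_ne_zero (ha0 _ _))
  have hmem : ∀ j < N, ∀ z, h j z ∈ Complex.slitPlane := by
    intro j hj z
    have key : ‖h j z - 1‖ < 1 := by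
      have e : h j z - 1 = (a (j + 1) z - a j z) * (a j z)⁻¹ := by
        simp only [hh, ← div_eq_mul_inv, sub_div, div_self (ha0 j z)]
      rw [e, norm_mul, norm_inv, ← div_eq_mul_inv, div_lt_one (norm_pos_iff.mpr (ha0 j z))]
      exact lt_of_lt_of_le (hclose j hj z) (ham j z)
    rw [Complex.mem_slitPlane_iff]
    left
    have h1 : |(h j z - 1).re| ≤ ‖h j z - 1‖ := Complex.abs_re_le_norm _
    have h2 : (h j z - 1).re = (h j z).re - 1 := by simp
    rw [h2] at h1
    have := lt_of_le_of_lt h1 key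
    have := abs_lt.mp this
    linarith [this.1]
  have hhc : ∀ j : ℕ, Continuous (h j) := by
    intro j
    exact (hf.comp (continuous_sqScale _)).mul
      ((hf.comp (continuous_sqScale _)).inv₀ (fun z => h0 _))
  refine ⟨fun z => Complex.log (f (0, 0)) + ∑ j ∈ Finset.range N, Complex.log (h j z), ?_, ?_⟩
  · refine continuous_const.add (continuous_finset_sum _ (fun j hj => ?_))
    rw [continuous_iff_continuousAt]
    intro z
    exact (continuousAt_clog (hmem j (Finset.mem_range.mp hj) z)).comp
      (hhc j).continuousAt
  · intro z
    rw [Complex.exp_add, Complex.exp_sum, Complex.exp_log (h0 (0, 0))]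
    have : ∀ j ∈ Finset.range N, Complex.exp (Complex.log (h j z)) = h j z :=
      fun j _ => Complex.exp_log (hne j z)
    rw [Finset.prod_congr rfl this]
    have htele : ∏ j ∈ Finset.range N, h j z = a N z * (a 0 z)⁻¹ :=
      tele_prod (fun j => a j z) (fun j => ha0 j z) N
    have hrN : r N = 1 := by
      apply Subtype.ext
      simp [hr, div_self (ne_of_gt hNpos)]
    have hr0 : r 0 = 0 := by
      apply Subtype.ext
      simp [hr]
    have haN : a N z = f z := by rw [haa]; simp only; rw [hrN, sqScale_one]
    have ha0' : a 0 z = f (0, 0) := by rw [haa]; simp only; rw [hr0, sqScale_zero]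
    rw [htele, haN, ha0', ← mul_assoc, mul_comm (f (0, 0)) (f z), mul_assoc,
      mul_inv_cancel₀ (h0 (0, 0)), mul_one]

lemma int_valued_eq {g : ℝ → ℝ} (hg : Continuous g) (hint : ∀ x, ∃ n : ℤ, g x = n)
    (x y : ℝ) : g x = g y := by
  have key : ∀ u v : ℝ, g u < g v → False := by
    intro u v h
    obtain ⟨nu, hu⟩ := hint u
    obtain ⟨nv, hv⟩ := hint v
    have hnm : nu < nv := by
      rw [hu, hv] at h; exact_mod_cast h
    have hc : (nu : ℝ) + 1 / 2 ∈ uIcc (g u) (g v) := by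
      rw [Set.mem_uIcc]
      left
      refine ⟨by rw [hu]; linarith, ?_⟩
      rw [hv]
      have : (nu : ℝ) + 1 ≤ nv := by exact_mod_cast hnm
      linarith
    obtain ⟨z, _, hz⟩ := intermediate_value_uIcc hg.continuousOn hc
    obtain ⟨k, hk⟩ := hint z
    rw [hk] at hz
    have h2 : (2 * k : ℤ) = 2 * nu + 1 := by
      have : (2 * k : ℝ) = 2 * nu + 1 := by linarith
      exact_mod_cast this
    omega
  rcases lt_trichotomy (g x) (g y) with h | h | h
  · exact absurd h (fun h => key _ _ h)
  · exact h
  · exact absurd h (fun h => key _ _ h)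

/-- the straight segment as a path in `ℝ × ℝ`. -/
def segPath (p q : ℝ × ℝ) : Path p q where
  toFun t := (1 - (t : ℝ)) • p + (t : ℝ) • q
  continuous_toFun := by fun_prop
  source' := by simp
  target' := by simp

lemma segPath_apply (p q : ℝ × ℝ) (t : I) :
    segPath p q t = ((1 - (t : ℝ)) * p.1 + (t : ℝ) * q.1,
      (1 - (t : ℝ)) * p.2 + (t : ℝ) * q.2) := rfl

/-- lift a path with range inside `D` to a path in the subtype. -/
def liftPath {D : Set (ℝ × ℝ)} {p q : ℝ × ℝ} (γ : Path p q) (h : ∀ t, γ t ∈ D)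
    (hp : p ∈ D) (hq : q ∈ D) : Path (⟨p, hp⟩ : D) ⟨q, hq⟩ where
  toFun t := ⟨γ t, h t⟩
  continuous_toFun := γ.continuous.subtype_mk _
  source' := Subtype.ext γ.source
  target' := Subtype.ext γ.target

lemma cplx_re (a b : ℝ) : ((a : ℂ) + (b : ℂ) * Complex.I).re = a := by simp

lemma cplx_im (a b : ℝ) : ((a : ℂ) + (b : ℂ) * Complex.I).im = b := by simp

lemma gap_mem (D : Set (ℝ × ℝ)) [SimplyConnectedSpace D] {xl xr yb yt x₀ y₀ : ℝ}
    (hx1 : xl < x₀) (hx2 : x₀ < xr) (hy1 : yb < y₀) (hy2 : y₀ < yt)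
    (hLs : ({xl} : Set ℝ) ×ˢ Icc yb yt ⊆ D) (hRs : ({xr} : Set ℝ) ×ˢ Icc yb yt ⊆ D)
    (hBs : Icc xl xr ×ˢ ({yb} : Set ℝ) ⊆ D) (hTs : Icc xl xr ×ˢ ({yt} : Set ℝ) ⊆ D) :
    (x₀, y₀) ∈ D := by
  by_contra hp
  have hxlr : xl ≤ xr := le_of_lt (hx1.trans hx2)
  have hybt : yb ≤ yt := le_of_lt (hy1.trans hy2)
  have hA : ((xl, y₀) : ℝ × ℝ) ∈ D := hLs ⟨rfl, hy1.le, hy2.le⟩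
  have hB' : ((xr, y₀) : ℝ × ℝ) ∈ D := hRs ⟨rfl, hy1.le, hy2.le⟩
  -- build a path from (xl,y₀) to (xr,y₀) through height yc
  have mk : ∀ yc : ℝ, yb ≤ yc → yc ≤ yt → (Icc xl xr ×ˢ ({yc} : Set ℝ) ⊆ D) →
      ∃ γ : Path (⟨(xl, y₀), hA⟩ : D) ⟨(xr, y₀), hB'⟩,
        ∀ t : I, ((γ t : ℝ × ℝ)).2 ∈ uIcc y₀ yc := by
    intro yc h1 h2 hMid
    set γ0 : Path ((xl, y₀) : ℝ × ℝ) (xr, y₀) :=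
      (segPath (xl, y₀) (xl, yc)).trans
        ((segPath (xl, yc) (xr, yc)).trans (segPath (xr, yc) (xr, y₀))) with hγ0
    have huIb : uIcc y₀ yc ⊆ Icc yb yt :=
      Set.uIcc_subset_Icc ⟨hy1.le, hy2.le⟩ ⟨h1, h2⟩
    have hkey : ∀ t : I, γ0 t ∈ D ∧ (γ0 t).2 ∈ uIcc y₀ yc := by
      intro t
      have hmem : γ0 t ∈ range γ0 := mem_range_self t
      rw [hγ0, Path.trans_range, Path.trans_range] at hmem
      have hseg : ∀ (a b : ℝ × ℝ) (u : I), segPath a b u ∈ segment ℝ a b := by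
        intro a b u
        rw [segPath_apply]
        exact ⟨1 - (u : ℝ), u, by linarith [u.2.2], u.2.1, by ring, rfl⟩
      rcases hmem with ⟨u, hu⟩ | ⟨u, hu⟩ | ⟨u, hu⟩
      all_goals rw [segPath_apply] at hu
      · -- vertical left segment
        have e1 : (γ0 t).1 = xl := by rw [← hu]; simp only; ring
        have e2 : (γ0 t).2 ∈ uIcc y₀ yc := by
          rw [← segment_eq_uIcc]
          refine ⟨1 - (u : ℝ), u, by linarith [u.2.2], u.2.1, by ring, ?_⟩
          rw [← hu]; simp [smul_eq_mul]
        exact ⟨hLs ⟨e1, huIb e2⟩, e2⟩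
      · -- horizontal segment at height yc
        have e2 : (γ0 t).2 = yc := by rw [← hu]; simp only; ring
        have e1 : (γ0 t).1 ∈ Icc xl xr := by
          rw [← uIcc_of_le hxlr, ← segment_eq_uIcc]
          refine ⟨1 - (u : ℝ), u, by linarith [u.2.2], u.2.1, by ring, ?_⟩
          rw [← hu]; simp [smul_eq_mul]
        exact ⟨hMid ⟨e1, e2⟩, by rw [e2]; exact right_mem_uIcc⟩
      · -- vertical right segment
        have e1 : (γ0 t).1 = xr := by rw [← hu]; simp only; ring
        have e2 : (γ0 t).2 ∈ uIcc y₀ yc := by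
          rw [uIcc_comm, ← segment_eq_uIcc]
          refine ⟨1 - (u : ℝ), u, by linarith [u.2.2], u.2.1, by ring, ?_⟩
          rw [← hu]; simp [smul_eq_mul]
        exact ⟨hRs ⟨e1, huIb e2⟩, e2⟩
    exact ⟨liftPath γ0 (fun t => (hkey t).1) hA hB', fun t => (hkey t).2⟩
  obtain ⟨Γu, hΓu⟩ := mk yt hybt le_rfl hTs
  obtain ⟨Γd, hΓd⟩ := mk yb le_rfl hybt hBs
  obtain ⟨H⟩ := SimplyConnectedSpace.paths_homotopic Γu Γd
  -- the complex-valued map avoiding 0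
  set f : I × I → ℂ := fun z =>
    (((H z : D) : ℝ × ℝ).1 - x₀ : ℝ) + (((H z : D) : ℝ × ℝ).2 - y₀ : ℝ) * Complex.I with hf
  have hHc : Continuous fun z : I × I => ((H z : D) : ℝ × ℝ) :=
    continuous_subtype_val.comp H.continuous
  have hfc : Continuous f := by
    apply Continuous.add
    · exact Complex.continuous_ofReal.comp ((hHc.fst).sub continuous_const)
    · exact (Complex.continuous_ofReal.comp ((hHc.snd).sub continuous_const)).mul
        continuous_const
  have hf0 : ∀ z, f z ≠ 0 := by
    intro z hz
    apply hp
    have hre := congrArg Complex.re hz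
    have him := congrArg Complex.im hz
    rw [hf] at hre him
    simp only [cplx_re, cplx_im, Complex.zero_re, Complex.zero_im] at hre him
    have : ((H z : D) : ℝ × ℝ) = (x₀, y₀) := by
      apply Prod.ext <;> simp <;> linarith
    rw [← this]
    exact (H z : D).2
  obtain ⟨L, hLc, hLe⟩ := exists_log_square f hfc hf0
  set θ : I × I → ℝ := fun z => (L z).im with hθ
  have hre : ∀ z, Real.exp ((L z).re) * Real.cos (θ z) = ((H z : D) : ℝ × ℝ).1 - x₀ := by
    intro z
    have := congrArg Complex.re (hLe z)
    rwa [Complex.exp_re, hf, cplx_re] at this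
  have him : ∀ z, Real.exp ((L z).re) * Real.sin (θ z) = ((H z : D) : ℝ × ℝ).2 - y₀ := by
    intro z
    have := congrArg Complex.im (hLe z)
    rwa [Complex.exp_im, hf, cplx_im] at this
  -- edge values
  have hedge0 : ∀ s : I, H (s, 0) = ⟨(xl, y₀), hA⟩ := fun s => H.source s
  have hedge1 : ∀ s : I, H (s, 1) = ⟨(xr, y₀), hB'⟩ := fun s => H.target s
  have hsc0 : ∀ s : I, Real.sin (θ (s, 0)) = 0 ∧ Real.cos (θ (s, 0)) < 0 := by
    intro s
    have h1 := hre (s, 0)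
    have h2 := him (s, 0)
    rw [hedge0 s] at h1 h2
    simp only at h1 h2
    have hexp := Real.exp_pos ((L (s, 0)).re)
    constructor
    · have : Real.exp ((L (s, 0)).re) * Real.sin (θ (s, 0)) = 0 := by rw [h2]; ring
      exact (mul_eq_zero.mp this).resolve_left (ne_of_gt hexp)
    · nlinarith [h1]
  have hsc1 : ∀ s : I, Real.sin (θ (s, 1)) = 0 ∧ 0 < Real.cos (θ (s, 1)) := by
    intro s
    have h1 := hre (s, 1)
    have h2 := him (s, 1)
    rw [hedge1 s] at h1 h2
    simp only at h1 h2
    have hexp := Real.exp_pos ((L (s, 1)).re)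
    constructor
    · have : Real.exp ((L (s, 1)).re) * Real.sin (θ (s, 1)) = 0 := by rw [h2]; ring
      exact (mul_eq_zero.mp this).resolve_left (ne_of_gt hexp)
    · nlinarith [h1]
  -- constancy of θ along the two horizontal edges
  have hconst : ∀ e : I, (∀ s : I, Real.sin (θ (s, e)) = 0) →
      ∀ s : I, θ (s, e) = θ (0, e) := by
    intro e hsin s
    set g : ℝ → ℝ := fun u => θ (projIcc (0:ℝ) 1 zero_le_one u, e) / Real.pi with hg
    have hgc : Continuous g := by
      apply Continuous.div_const
      exact Complex.continuous_im.comp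
        (hLc.comp ((continuous_projIcc).prodMk continuous_const))
    have hgint : ∀ u : ℝ, ∃ n : ℤ, g u = n := by
      intro u
      obtain ⟨n, hn⟩ := Real.sin_eq_zero_iff.mp (hsin (projIcc (0:ℝ) 1 zero_le_one u))
      refine ⟨n, ?_⟩
      simp only [hg]
      rw [← hn, mul_div_assoc, div_self Real.pi_ne_zero, mul_one]
    have := int_valued_eq hgc hgint (s : ℝ) ((0 : I) : ℝ)
    rw [hg] at this
    simp only [projIcc_val, projIcc_of_mem _ s.2, projIcc_of_mem _ (0 : I).2] at this
    have hReal.pi := Real.pi_ne_zero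
    field_simp at this
    convert this using 3 <;> exact (Subtype.ext rfl)
  have hc0 : ∀ s : I, θ (s, 0) = θ (0, 0) := hconst 0 (fun s => (hsc0 s).1)
  have hc1 : ∀ s : I, θ (s, 1) = θ (0, 1) := hconst 1 (fun s => (hsc1 s).1)
  -- the value of θ at the corners
  obtain ⟨n0, hn0⟩ := Real.sin_eq_zero_iff.mp (hsc0 0).1
  obtain ⟨n1, hn1⟩ := Real.sin_eq_zero_iff.mp (hsc1 0).1
  obtain ⟨l, hl⟩ : Odd n0 := by
    rcases Int.even_or_odd n0 with he | ho
    · exfalso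
      obtain ⟨k, hk⟩ := he
      have : θ (0, 0) = (k : ℝ) * (2 * Real.pi) := by
        rw [← hn0, hk]; push_cast; ring
      have hcos : Real.cos (θ (0, 0)) = 1 := by rw [this, Real.cos_int_mul_two_pi]
      linarith [(hsc0 0).2]
    · exact ho
  obtain ⟨m, hm⟩ : Even n1 := by
    rcases Int.even_or_odd n1 with he | ho
    · exact he
    · exfalso
      obtain ⟨k, hk⟩ := ho
      have : θ (0, 1) = Real.pi + (k : ℝ) * (2 * Real.pi) := by
        rw [← hn1, hk]; push_cast; ring
      have hcos : Real.cos (θ (0, 1)) = -1 := by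
        rw [this, Real.cos_add_int_mul_two_pi, Real.cos_pi]
      linarith [(hsc1 0).2]
  -- α = (2l+1)Real.pi, β = 2mReal.pi  (note hm : n1 = m + m)
  have hα : θ (0, 0) = (2 * (l : ℝ) + 1) * Real.pi := by rw [← hn0, hl]; push_cast; ring
  have hβ : θ (0, 1) = 2 * (m : ℝ) * Real.pi := by rw [← hn1, hm]; push_cast; ring
  -- rows: sign of sin along the two rows
  have hrow0 : ∀ t : I, 0 ≤ Real.sin (θ (0, t)) := by
    intro t
    have h2 := him (0, t)
    have happ : H (0, t) = Γu t := H.apply_zero t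
    rw [happ] at h2
    have hy := hΓu t
    rw [uIcc_of_le hy2.le] at hy
    nlinarith [Real.exp_pos ((L (0, t)).re), hy.1]
  have hrow1 : ∀ t : I, Real.sin (θ (1, t)) ≤ 0 := by
    intro t
    have h2 := him (1, t)
    have happ : H (1, t) = Γd t := H.apply_one t
    rw [happ] at h2
    have hy := hΓd t
    rw [uIcc_comm, uIcc_of_le hy1.le] at hy
    nlinarith [Real.exp_pos ((L (1, t)).re), hy.2]
  -- IVT on the rows
  have hval : ∀ s : I, (∀ c ∈ uIcc (θ (s, 0)) (θ (s, 1)), ∃ t : I, θ (s, t) = c) := by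
    intro s c hc
    set w : ℝ → ℝ := fun u => θ (s, projIcc (0:ℝ) 1 zero_le_one u) with hw
    have hwc : Continuous w :=
      Complex.continuous_im.comp
        (hLc.comp (continuous_const.prodMk continuous_projIcc))
    have hw0 : w 0 = θ (s, 0) := by rw [hw]; simp [projIcc_left]
    have hw1 : w 1 = θ (s, 1) := by rw [hw]; simp [projIcc_right]
    have : c ∈ w '' uIcc (0:ℝ) 1 := by
      apply intermediate_value_uIcc hwc.continuousOn
      rw [hw0, hw1]; exact hc
    obtain ⟨u, _, hu⟩ := this
    exact ⟨projIcc (0:ℝ) 1 zero_le_one u, hu⟩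
  have hReal.pi := Real.pi_pos
  -- row 0 forces m = l
  have hml : m = l := by
    by_contra hne
    rcases lt_or_gt_of_ne hne with hlt | hgt
    · -- m ≤ l - 1 : take c = 2lReal.pi - Real.pi/2
      have hmle : (m : ℝ) ≤ (l : ℝ) - 1 := by
        have : m ≤ l - 1 := by omega
        exact_mod_cast this
      have hcmem : (-(Real.pi/2) + (l:ℝ) * (2*Real.pi)) ∈ uIcc (θ (0, 0)) (θ (0, 1)) := by
        rw [hα, hβ, Set.mem_uIcc]
        right
        constructor <;> nlinarith
      obtain ⟨t, ht⟩ := hval 0 _ hcmem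
      have := hrow0 t
      rw [ht, Real.sin_add_int_mul_two_pi, Real.sin_neg, Real.sin_pi_div_two] at this
      linarith
    · -- m ≥ l + 1 : take c = (2l+1)Real.pi + Real.pi/2 = 3Real.pi/2 + l(2Real.pi)
      have hmge : (l : ℝ) + 1 ≤ (m : ℝ) := by exact_mod_cast hgt
      have hcmem : (Real.pi + Real.pi/2 + (l:ℝ) * (2*Real.pi)) ∈ uIcc (θ (0, 0)) (θ (0, 1)) := by
        rw [hα, hβ, Set.mem_uIcc]
        left
        constructor <;> nlinarith
      obtain ⟨t, ht⟩ := hval 0 _ hcmem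
      have := hrow0 t
      rw [ht, Real.sin_add_int_mul_two_pi] at this
      have : (0:ℝ) ≤ Real.sin (Real.pi + Real.pi/2) := this
      rw [Real.sin_add, Real.sin_pi, Real.cos_pi, Real.sin_pi_div_two,
        Real.cos_pi_div_two] at this
      linarith
  -- row 1 gives the contradiction : take c = 2lReal.pi + Real.pi/2
  have hcmem : (Real.pi/2 + (l:ℝ) * (2*Real.pi)) ∈ uIcc (θ (1, 0)) (θ (1, 1)) := by
    rw [hc0 1, hc1 1, hα, hβ, hml, Set.mem_uIcc]
    right
    constructor <;> nlinarith
  obtain ⟨t, ht⟩ := hval 1 _ hcmem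
  have := hrow1 t
  rw [ht, Real.sin_add_int_mul_two_pi, Real.sin_pi_div_two] at this
  linarith

lemma slice_y {D : Set (ℝ × ℝ)} {a b c d e f g k : ℝ}
    (hfb : (Icc a b ×ˢ ({c} : Set ℝ)) ⊆ frontier D)
    (hft : (Icc a b ×ˢ ({d} : Set ℝ)) ⊆ frontier D)
    (hhD : (Icc e f ×ˢ Icc g k : Set (ℝ × ℝ)) ⊆ D)
    (hx : ∃ x, x ∈ Ioo a b ∩ Ioo e f) (hy : ∃ y, y ∈ Ioo c d ∩ Ioo g k) :
    c ≤ g ∧ k ≤ d := by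
  obtain ⟨x, hx1, hx2⟩ := hx
  obtain ⟨y, hy1, hy2⟩ := hy
  have hint : (Ioo e f ×ˢ Ioo g k : Set (ℝ × ℝ)) ⊆ interior D := by
    have : (Ioo e f ×ˢ Ioo g k : Set (ℝ × ℝ)) = interior (Icc e f ×ˢ Icc g k) := by
      rw [interior_prod_eq, interior_Icc, interior_Icc]
    rw [this]
    exact interior_mono hhD
  constructor
  · by_contra hgc
    push_neg at hgc
    have hc : (x, c) ∈ interior D := hint ⟨hx2, ⟨hgc, lt_trans hy1.1 hy2.2⟩⟩
    have hfr : (x, c) ∈ frontier D := hfb ⟨⟨hx1.1.le, hx1.2.le⟩, rfl⟩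
    exact hfr.2 hc
  · by_contra hkd
    push_neg at hkd
    have hc : (x, d) ∈ interior D := hint ⟨hx2, ⟨lt_trans hy2.1 hy1.2, hkd⟩⟩
    have hfr : (x, d) ∈ frontier D := hft ⟨⟨hx1.1.le, hx1.2.le⟩, rfl⟩
    exact hfr.2 hc

lemma slice_x {D : Set (ℝ × ℝ)} {a b c d e f g k : ℝ}
    (hfl : (({e} : Set ℝ) ×ˢ Icc g k) ⊆ frontier D)
    (hfr : (({f} : Set ℝ) ×ˢ Icc g k) ⊆ frontier D)
    (hvD : (Icc a b ×ˢ Icc c d : Set (ℝ × ℝ)) ⊆ D)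
    (hx : ∃ x, x ∈ Ioo a b ∩ Ioo e f) (hy : ∃ y, y ∈ Ioo c d ∩ Ioo g k) :
    e ≤ a ∧ b ≤ f := by
  obtain ⟨x, hx1, hx2⟩ := hx
  obtain ⟨y, hy1, hy2⟩ := hy
  have hint : (Ioo a b ×ˢ Ioo c d : Set (ℝ × ℝ)) ⊆ interior D := by
    have : (Ioo a b ×ˢ Ioo c d : Set (ℝ × ℝ)) = interior (Icc a b ×ˢ Icc c d) := by
      rw [interior_prod_eq, interior_Icc, interior_Icc]
    rw [this]
    exact interior_mono hvD
  constructor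
  · by_contra hea
    push_neg at hea
    have hc : (e, y) ∈ interior D := hint ⟨⟨hea, lt_trans hx2.1 hx1.2⟩, hy1⟩
    have hfr' : (e, y) ∈ frontier D := hfl ⟨rfl, ⟨hy2.1.le, hy2.2.le⟩⟩
    exact hfr'.2 hc
  · by_contra hbf
    push_neg at hbf
    have hc : (f, y) ∈ interior D := hint ⟨⟨lt_trans hx1.1 hx2.2, hbf⟩, hy1⟩
    have hfr' : (f, y) ∈ frontier D := hfr ⟨rfl, ⟨hy2.1.le, hy2.2.le⟩⟩
    exact hfr'.2 hc

lemma hull_two_Icc {a1 b1 a2 b2 : ℝ} (h1 : a1 ≤ b1) (h2 : a2 ≤ b2) :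
    convexHull ℝ (Icc a1 b1 ∪ Icc a2 b2) = Icc (min a1 a2) (max b1 b2) := by
  have hmm : min a1 a2 ≤ max b1 b2 :=
    le_trans (min_le_left _ _) (le_trans h1 (le_max_left _ _))
  apply subset_antisymm
  · apply convexHull_min _ (convex_Icc _ _)
    rintro x (hx | hx)
    · exact ⟨le_trans (min_le_left _ _) hx.1, le_trans hx.2 (le_max_left _ _)⟩
    · exact ⟨le_trans (min_le_right _ _) hx.1, le_trans hx.2 (le_max_right _ _)⟩
  · rw [← segment_eq_Icc hmm]
    apply (convex_convexHull ℝ _).segment_subset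
    · apply subset_convexHull
      rcases le_total a1 a2 with h | h
      · left; rw [min_eq_left h]; exact ⟨le_rfl, h1⟩
      · right; rw [min_eq_right h]; exact ⟨le_rfl, h2⟩
    · apply subset_convexHull
      rcases le_total b1 b2 with h | h
      · right; rw [max_eq_right h]; exact ⟨h2, le_rfl⟩
      · left; rw [max_eq_left h]; exact ⟨h1, le_rfl⟩

lemma gap_case (D : Set (ℝ × ℝ)) [SimplyConnectedSpace D]
    {aA bA cA dA aB bB cB dB eA fA gA kA eB fB gB kB x y : ℝ}
    (hvA : (Icc aA bA ×ˢ Icc cA dA : Set (ℝ × ℝ)) ⊆ D)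
    (hvB : (Icc aB bB ×ˢ Icc cB dB : Set (ℝ × ℝ)) ⊆ D)
    (hhA : (Icc eA fA ×ˢ Icc gA kA : Set (ℝ × ℝ)) ⊆ D)
    (hhB : (Icc eB fB ×ˢ Icc gB kB : Set (ℝ × ℝ)) ⊆ D)
    (h1 : cA ≤ gA) (h4 : kB ≤ dA)
    (h1' : cB ≤ gA) (h4' : kB ≤ dB)
    (e1 : eA ≤ aA) (e4 : bB ≤ fA)
    (e1' : eB ≤ aA) (e4' : bB ≤ fB)
    (hgA : gA < kA) (hgB : gB < kB) (hcA : aA < bA) (haB : aB < bB)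
    (hx1 : bA < x) (hx2 : x < aB) (hy1 : kA < y) (hy2 : y < gB) :
    (x, y) ∈ D := by
  apply gap_mem D hx1 hx2 hy1 hy2
  · rintro ⟨u, w⟩ ⟨hu, hw⟩
    rw [Set.mem_singleton_iff] at hu; subst hu
    exact hvA ⟨⟨hcA.le, le_rfl⟩, ⟨by linarith [hw.1], by linarith [hw.2]⟩⟩
  · rintro ⟨u, w⟩ ⟨hu, hw⟩
    rw [Set.mem_singleton_iff] at hu; subst hu
    exact hvB ⟨⟨le_rfl, haB.le⟩, ⟨by linarith [hw.1], by linarith [hw.2]⟩⟩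
  · rintro ⟨u, w⟩ ⟨hu, hw⟩
    rw [Set.mem_singleton_iff] at hw; subst hw
    exact hhA ⟨⟨by linarith [hu.1], by linarith [hu.2]⟩, ⟨hgA.le, le_rfl⟩⟩
  · rintro ⟨u, w⟩ ⟨hu, hw⟩
    rw [Set.mem_singleton_iff] at hw; subst hw
    exact hhB ⟨⟨by linarith [hu.1], by linarith [hu.2]⟩, ⟨le_rfl, hgB.le⟩⟩

/-- If the interiors of each vertical slice `vᵢ` and horizontal slice `hⱼ`
pairwise intersect (a 4-cycle in the pixelation graph of the simply connected
domain `D`), then the convex hull of the union of the four pixels `vᵢ ∩ hⱼ`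
is an axis-aligned rectangle contained in `D`. -/

theorem four_cycle_hull_is_rectangle (D : Set (ℝ × ℝ))
    (hDcompact : IsCompact D) [SimplyConnectedSpace D]
    (v₁ v₂ h₁ h₂ : Set (ℝ × ℝ))
    (hv₁ : IsVSlice D v₁) (hv₂ : IsVSlice D v₂)
    (hh₁ : IsHSlice D h₁) (hh₂ : IsHSlice D h₂)
    (h11 : (interior v₁ ∩ interior h₁).Nonempty)
    (h12 : (interior v₁ ∩ interior h₂).Nonempty)
    (h21 : (interior v₂ ∩ interior h₁).Nonempty)
    (h22 : (interior v₂ ∩ interior h₂).Nonempty) :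
    convexHull ℝ ((v₁ ∩ h₁) ∪ (v₁ ∩ h₂) ∪ (v₂ ∩ h₁) ∪ (v₂ ∩ h₂)) ⊆ D ∧
    ∃ a b c d : ℝ, a ≤ b ∧ c ≤ d ∧
      convexHull ℝ ((v₁ ∩ h₁) ∪ (v₁ ∩ h₂) ∪ (v₂ ∩ h₁) ∪ (v₂ ∩ h₂))
        = Set.Icc a b ×ˢ Set.Icc c d := by
  obtain ⟨a₁, b₁, c₁, d₁, hab₁, hcd₁, hv₁e, hv₁D, hv₁bot, hv₁top⟩ := hv₁
  obtain ⟨a₂, b₂, c₂, d₂, hab₂, hcd₂, hv₂e, hv₂D, hv₂bot, hv₂top⟩ := hv₂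
  obtain ⟨e₁, f₁, g₁, k₁, hef₁, hgk₁, hh₁e, hh₁D, hh₁l, hh₁r⟩ := hh₁
  obtain ⟨e₂, f₂, g₂, k₂, hef₂, hgk₂, hh₂e, hh₂D, hh₂l, hh₂r⟩ := hh₂
  subst hv₁e; subst hv₂e; subst hh₁e; subst hh₂e
  have hIcc : ∀ (a b c d : ℝ),
      interior ((Icc a b ×ˢ Icc c d : Set (ℝ × ℝ))) = Ioo a b ×ˢ Ioo c d := by
    intro a b c d; rw [interior_prod_eq, interior_Icc, interior_Icc]
  rw [hIcc, hIcc] at h11 h12 h21 h22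
  obtain ⟨⟨x11, y11⟩, ⟨hxa11, hya11⟩, hxb11, hyb11⟩ := h11
  obtain ⟨⟨x12, y12⟩, ⟨hxa12, hya12⟩, hxb12, hyb12⟩ := h12
  obtain ⟨⟨x21, y21⟩, ⟨hxa21, hya21⟩, hxb21, hyb21⟩ := h21
  obtain ⟨⟨x22, y22⟩, ⟨hxa22, hya22⟩, hxb22, hyb22⟩ := h22
  have Hy11 := slice_y hv₁bot hv₁top hh₁D ⟨x11, hxa11, hxb11⟩ ⟨y11, hya11, hyb11⟩
  have Hy12 := slice_y hv₁bot hv₁top hh₂D ⟨x12, hxa12, hxb12⟩ ⟨y12, hya12, hyb12⟩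
  have Hy21 := slice_y hv₂bot hv₂top hh₁D ⟨x21, hxa21, hxb21⟩ ⟨y21, hya21, hyb21⟩
  have Hy22 := slice_y hv₂bot hv₂top hh₂D ⟨x22, hxa22, hxb22⟩ ⟨y22, hya22, hyb22⟩
  have Hx11 := slice_x hh₁l hh₁r hv₁D ⟨x11, hxa11, hxb11⟩ ⟨y11, hya11, hyb11⟩
  have Hx12 := slice_x hh₂l hh₂r hv₁D ⟨x12, hxa12, hxb12⟩ ⟨y12, hya12, hyb12⟩
  have Hx21 := slice_x hh₁l hh₁r hv₂D ⟨x21, hxa21, hxb21⟩ ⟨y21, hya21, hyb21⟩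
  have Hx22 := slice_x hh₂l hh₂r hv₂D ⟨x22, hxa22, hxb22⟩ ⟨y22, hya22, hyb22⟩
  have pix : ∀ {a b c d e f g k : ℝ}, e ≤ a → b ≤ f → c ≤ g → k ≤ d →
      (Icc a b ×ˢ Icc c d : Set (ℝ × ℝ)) ∩ (Icc e f ×ˢ Icc g k) = Icc a b ×ˢ Icc g k := by
    intro a b c d e f g k h1 h2 h3 h4
    rw [Set.prod_inter_prod]
    congr 1
    · exact Set.inter_eq_left.mpr (Icc_subset_Icc h1 h2)
    · exact Set.inter_eq_right.mpr (Icc_subset_Icc h3 h4)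
  have hrect : convexHull ℝ
      (((Icc a₁ b₁ ×ˢ Icc c₁ d₁ : Set (ℝ × ℝ)) ∩ (Icc e₁ f₁ ×ˢ Icc g₁ k₁) ∪
        (Icc a₁ b₁ ×ˢ Icc c₁ d₁) ∩ (Icc e₂ f₂ ×ˢ Icc g₂ k₂) ∪
        (Icc a₂ b₂ ×ˢ Icc c₂ d₂) ∩ (Icc e₁ f₁ ×ˢ Icc g₁ k₁)) ∪
        (Icc a₂ b₂ ×ˢ Icc c₂ d₂) ∩ (Icc e₂ f₂ ×ˢ Icc g₂ k₂))
      = Icc (min a₁ a₂) (max b₁ b₂) ×ˢ Icc (min g₁ g₂) (max k₁ k₂) := by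
    rw [pix Hx11.1 Hx11.2 Hy11.1 Hy11.2, pix Hx12.1 Hx12.2 Hy12.1 Hy12.2,
      pix Hx21.1 Hx21.2 Hy21.1 Hy21.2, pix Hx22.1 Hx22.2 Hy22.1 Hy22.2]
    have hU : ((Icc a₁ b₁ ×ˢ Icc g₁ k₁ : Set (ℝ × ℝ)) ∪ Icc a₁ b₁ ×ˢ Icc g₂ k₂ ∪
        Icc a₂ b₂ ×ˢ Icc g₁ k₁) ∪ Icc a₂ b₂ ×ˢ Icc g₂ k₂
        = (Icc a₁ b₁ ∪ Icc a₂ b₂) ×ˢ (Icc g₁ k₁ ∪ Icc g₂ k₂) := by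
      ext p
      simp only [Set.mem_union, Set.mem_prod]
      tauto
    rw [hU, convexHull_prod, hull_two_Icc hab₁.le hab₂.le, hull_two_Icc hgk₁.le hgk₂.le]
  rw [hrect]
  constructor
  · rintro ⟨x, y⟩ ⟨hx, hy⟩
    by_cases hxv₁ : x ∈ Icc a₁ b₁
    · exact hv₁D ⟨hxv₁, ⟨le_trans (le_min Hy11.1 Hy12.1) hy.1,
        le_trans hy.2 (max_le Hy11.2 Hy12.2)⟩⟩
    by_cases hxv₂ : x ∈ Icc a₂ b₂
    · exact hv₂D ⟨hxv₂, ⟨le_trans (le_min Hy21.1 Hy22.1) hy.1,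
        le_trans hy.2 (max_le Hy21.2 Hy22.2)⟩⟩
    by_cases hyh₁ : y ∈ Icc g₁ k₁
    · exact hh₁D ⟨⟨le_trans (le_min Hx11.1 Hx21.1) hx.1,
        le_trans hx.2 (max_le Hx11.2 Hx21.2)⟩, hyh₁⟩
    by_cases hyh₂ : y ∈ Icc g₂ k₂
    · exact hh₂D ⟨⟨le_trans (le_min Hx12.1 Hx22.1) hx.1,
        le_trans hx.2 (max_le Hx12.2 Hx22.2)⟩, hyh₂⟩
    simp only [Set.mem_Icc, not_and_or, not_le] at hxv₁ hxv₂ hyh₁ hyh₂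
    have hxg : (b₁ < x ∧ x < a₂) ∨ (b₂ < x ∧ x < a₁) := by
      rcases hxv₁ with h | h <;> rcases hxv₂ with h' | h'
      · exact absurd hx.1 (by rw [not_le]; exact lt_min h h')
      · right; exact ⟨h', h⟩
      · left; exact ⟨h, h'⟩
      · exact absurd hx.2 (by rw [not_le]; exact max_lt h h')
    have hyg : (k₁ < y ∧ y < g₂) ∨ (k₂ < y ∧ y < g₁) := by
      rcases hyh₁ with h | h <;> rcases hyh₂ with h' | h'
      · exact absurd hy.1 (by rw [not_le]; exact lt_min h h')
      · right; exact ⟨h', h⟩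
      · left; exact ⟨h, h'⟩
      · exact absurd hy.2 (by rw [not_le]; exact max_lt h h')
    rcases hxg with ⟨hbx, hxa⟩ | ⟨hbx, hxa⟩ <;> rcases hyg with ⟨hky, hyg'⟩ | ⟨hky, hyg'⟩
    · exact gap_case D hv₁D hv₂D hh₁D hh₂D Hy11.1 Hy12.2 Hy21.1 Hy22.2 Hx11.1 Hx21.2
        Hx12.1 Hx22.2 hgk₁ hgk₂ hab₁ hab₂ hbx hxa hky hyg'
    · exact gap_case D hv₁D hv₂D hh₂D hh₁D Hy12.1 Hy11.2 Hy22.1 Hy21.2 Hx12.1 Hx22.2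
        Hx11.1 Hx21.2 hgk₂ hgk₁ hab₁ hab₂ hbx hxa hky hyg'
    · exact gap_case D hv₂D hv₁D hh₁D hh₂D Hy21.1 Hy22.2 Hy11.1 Hy12.2 Hx21.1 Hx11.2
        Hx22.1 Hx12.2 hgk₁ hgk₂ hab₂ hab₁ hbx hxa hky hyg'
    · exact gap_case D hv₂D hv₁D hh₂D hh₁D Hy22.1 Hy21.2 Hy12.1 Hy11.2 Hx22.1 Hx12.2
        Hx21.1 Hx11.2 hgk₂ hgk₁ hab₂ hab₁ hbx hxa hky hyg'
  · exact ⟨min a₁ a₂, max b₁ b₂, min g₁ g₂, max k₁ k₂,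
      le_trans (min_le_left _ _) (le_trans hab₁.le (le_max_left _ _)),
      le_trans (min_le_left _ _) (le_trans hgk₁.le (le_max_left _ _)), rfl⟩
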